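/- For every t = 0,…,T−1 and every x ∈ ℝ, one has 0 ≤ v^{s,S}_t(x) − v_t(x) = V_t(x) − V*_t(x) + ε_t(x), where v_t(x) := V*_t(x) − c_t·x. -/

import Mathlib

open MeasureTheory Filter Set

theorem stmt7
    (T : ℕ) (hT : 2 ≤ T)
    (α : ℝ) (hα0 : 0 < α) (hα1 : α ≤ 1)
    (K : ℕ → ℝ) (hK0 : ∀ t, t < T → 0 ≤ K t)
    (hKmono : ∀ t, t + 2 ≤ T → α * K (t + 1) ≤ K t)
    (ν : ℕ → MeasureTheory.Measure ℝ)
    (hprob : ∀ t, MeasureTheory.IsProbabilityMeasure (ν t))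
    (hpos : ∀ t, ν t (Set.Iio 0) = 0)
    (F : ℕ → ℝ → ℝ) (hF : ∀ t x, F t x = (ν t (Set.Iic x)).toReal)
    (C : ℕ → ℝ → ℝ)
    (hCconv : ∀ t, t < T → ConvexOn ℝ Set.univ (C t))
    (hCcoer : ∀ t, t < T → Filter.Tendsto (C t) (Filter.cocompact ℝ) Filter.atTop)
    (Hstar Vstar : ℕ → ℝ → ℝ)
    (hVstarT : ∀ x, Vstar T x = 0)
    (hHstar : ∀ t, t < T → ∀ y,
      Hstar t y = C t y + α * ∫ ξ, Vstar (t + 1) (y - ξ) ∂(ν t))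
    (hVstar : ∀ t, t < T → ∀ x,
      Vstar t x = sInf ((fun y => K t * (if x < y then (1 : ℝ) else 0) + Hstar t y) '' Set.Ici x))
    (θ : ℝ) (hθ : 0 < θ)
    (f : ℕ → ℤ → ℝ)
    (hf : ∀ t (n : ℤ), f t n = F t (((n : ℝ) + 1) * θ) - F t ((n : ℝ) * θ))
    (Cm SU : ℕ → ℝ)
    (hCm : ∀ t, t < T → IsLeast {x | ∀ y, C t x ≤ C t y} (Cm t))
    (hSU : ∀ t, t < T → ∀ n0 : ℤ, (n0 : ℝ) * θ < Cm t → Cm t ≤ ((n0 : ℝ) + 1) * θ →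
      IsLeast {w | (∃ m : ℤ, w = (m : ℝ) * θ) ∧ Cm t ≤ w ∧ C t ((n0 : ℝ) * θ) + K t < C t w} (SU t))
    (s S : ℕ → ℝ) (I Ibar : ℕ → ℝ)
    (hsT1a : s (T - 1) ≤ Cm (T - 1))
    (hsT1b : C (T - 1) (s (T - 1)) = C (T - 1) (Cm (T - 1)) + K (T - 1))
    (hIbarT1 : Ibar (T - 1) = s (T - 1))
    (hI : ∀ t, t + 2 ≤ T →
      IsGreatest {w | (∃ m : ℤ, w = (m : ℝ) * θ) ∧ w < min (Ibar (t + 1) - θ) (Cm t)} (I t))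
    (hIbar : ∀ t, t + 2 ≤ T →
      IsGreatest {w | (∃ m : ℤ, w = (m : ℝ) * θ) ∧ w ≤ I t ∧ C t (I t) + K t < C t w} (Ibar t - θ))
    (H V : ℕ → ℝ → ℝ)
    (hHT1 : ∀ y, H (T - 1) y = C (T - 1) y)
    (hST1 : S (T - 1) = Cm (T - 1))
    (hV : ∀ t, t < T → ∀ y, V t y = if y < s t then H t (S t) + K t else H t y)
    (hHrec : ∀ t, t + 2 ≤ T → ∀ y,
      H t y = C t y + α * ∑' n : ℕ, V (t + 1) (y - ((n : ℝ) - 1) * θ) * f t ((n : ℤ) - 1))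
    (hSdef : ∀ t, t + 2 ≤ T →
      IsGreatest {w | (∃ m : ℤ, w = (m : ℝ) * θ) ∧ I t ≤ w ∧ w ≤ SU t ∧
        ∀ u, (∃ n : ℤ, u = (n : ℝ) * θ) → I t ≤ u → u ≤ SU t → H t w ≤ H t u} (S t))
    (hsdef0 : ∀ t, t + 2 ≤ T → K t = 0 → s t = S t)
    (hsdef1 : ∀ t, t + 2 ≤ T → 0 < K t →
      IsLeast {w | (∃ m : ℤ, w = (m : ℝ) * θ) ∧ Ibar t ≤ w ∧ w ≤ S t ∧ H t w ≤ H t (S t) + K t} (s t))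
    (c : ℕ → ℝ) (G : ℕ → ℝ → ℝ)
    (hDint : ∀ t, t < T → MeasureTheory.Integrable (fun ξ : ℝ => ξ) (ν t))
    (hCdef : ∀ t, t < T → ∀ y,
      C t y = (c t - α * c (t + 1)) * y + G t y + α * c (t + 1) * ∫ ξ, ξ ∂(ν t))
    (vsS : ℕ → ℝ → ℝ)
    (hvsST : ∀ x, vsS T x = -(c T) * x)
    (hvsSRec : ∀ t, t < T → ∀ x, vsS t x =
      (if x < s t then K t else 0)
        + c t * ((if x < s t then S t else x) - x)
        + G t (if x < s t then S t else x)
        + α * ∫ ξ, vsS (t + 1) ((if x < s t then S t else x) - ξ) ∂(ν t))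
    (A : ℕ → ℝ → ℝ)
    (hA : ∀ t, 1 ≤ t → t < T → ∀ x, A t x =
      (∫ ξ, V t (x - ξ) ∂(ν (t - 1)))
        - ∑' n : ℕ, V t (x - ((n : ℝ) - 1) * θ) * f (t - 1) ((n : ℤ) - 1))
    (eps : ℕ → ℝ → ℝ)
    (hepsT1 : ∀ x, eps (T - 1) x = 0)
    (heps : ∀ t, t + 2 ≤ T → ∀ x, eps t x =
      if x < s t then α * A (t + 1) (S t) + α * ∫ ξ, eps (t + 1) (S t - ξ) ∂(ν t)
      else α * A (t + 1) x + α * ∫ ξ, eps (t + 1) (x - ξ) ∂(ν t))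
    :
    ∀ t, t < T → ∀ x,
      0 ≤ vsS t x - (Vstar t x - c t * x) ∧
      vsS t x - (Vstar t x - c t * x) = V t x - Vstar t x + eps t x := by

  classical
  -- ### Preliminaries
  have haepos : ∀ t : ℕ, ∀ᵐ ξ ∂ν t, (0:ℝ) ≤ ξ := by
    intro t
    rw [ae_iff]
    convert hpos t using 2
    ext ξ
    simp [not_le]
  have hCcont : ∀ t, t < T → Continuous (C t) := by
    intro t ht
    exact continuousOn_univ.1 ((hCconv t ht).continuousOn isOpen_univ)
  have hFmono : ∀ t : ℕ, Monotone (F t) := by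
    intro t a b hab
    rw [hF, hF]
    exact ENNReal.toReal_mono (measure_ne_top _ _) (measure_mono (Set.Iic_subset_Iic.2 hab))
  have hF0 : ∀ (t : ℕ) (x : ℝ), 0 ≤ F t x := by
    intro t x; rw [hF]; exact ENNReal.toReal_nonneg
  have hF1 : ∀ (t : ℕ) (x : ℝ), F t x ≤ 1 := by
    intro t x
    haveI := hprob t
    rw [hF]
    have h1 : ν t (Set.Iic x) ≤ 1 := prob_le_one
    calc (ν t (Set.Iic x)).toReal ≤ (1 : ENNReal).toReal :=
          ENNReal.toReal_mono ENNReal.one_ne_top h1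
      _ = 1 := by simp
  have hfnn : ∀ (t : ℕ) (n : ℤ), 0 ≤ f t n := by
    intro t n
    rw [hf]
    have : ((n : ℝ)) * θ ≤ ((n : ℝ) + 1) * θ := by nlinarith
    linarith [hFmono t this]
  have htel : ∀ (t : ℕ) (N : ℕ),
      ∑ n ∈ Finset.range N, f t ((n : ℤ) - 1) = F t (((N : ℝ) - 1) * θ) - F t ((-1 : ℝ) * θ) := by
    intro t N
    have : ∀ n : ℕ, f t ((n : ℤ) - 1)
        = (fun m : ℕ => F t (((m : ℝ) - 1) * θ)) (n + 1) - (fun m : ℕ => F t (((m : ℝ) - 1) * θ)) n := by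
      intro n
      rw [hf]
      push_cast
      ring_nf
    rw [Finset.sum_congr rfl (fun n _ => this n), Finset.sum_range_sub (fun m : ℕ => F t (((m : ℝ) - 1) * θ))]
    push_cast
    ring_nf
  have hfsummable : ∀ t : ℕ, Summable (fun n : ℕ => f t ((n : ℤ) - 1)) := by
    intro t
    apply summable_of_sum_range_le (c := 1) (fun n => hfnn t _)
    intro N
    rw [htel]
    linarith [hF1 t (((N : ℝ) - 1) * θ), hF0 t ((-1 : ℝ) * θ)]
  have hfsum_le : ∀ t : ℕ, (∑' n : ℕ, f t ((n : ℤ) - 1)) ≤ 1 := by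
    intro t
    apply Real.tsum_le_of_sum_range_le (fun n => hfnn t _)
    intro N
    rw [htel]
    linarith [hF1 t (((N : ℝ) - 1) * θ), hF0 t ((-1 : ℝ) * θ)]
  -- integrability of ray-bounded measurable functions
  have hint : ∀ (t : ℕ) (h : ℝ → ℝ) (x B : ℝ), Measurable h → (∀ z, z ≤ x → |h z| ≤ B) →
      Integrable (fun ξ => h (x - ξ)) (ν t) := by
    intro t h x B hm hb
    haveI := hprob t
    have hmeas : AEStronglyMeasurable (fun ξ => h (x - ξ)) (ν t) :=
      (hm.comp (measurable_const.sub measurable_id)).aestronglyMeasurable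
    refine (integrable_const B).mono' hmeas ?_
    filter_upwards [haepos t] with ξ hξ
    simpa [Real.norm_eq_abs] using hb (x - ξ) (by linarith)
  have hintbd : ∀ (t : ℕ) (h : ℝ → ℝ) (x B : ℝ), (∀ z, z ≤ x → |h z| ≤ B) →
      |∫ ξ, h (x - ξ) ∂ν t| ≤ B := by
    intro t h x B hb
    haveI := hprob t
    have hub : ∀ᵐ ξ ∂ν t, ‖h (x - ξ)‖ ≤ B := by
      filter_upwards [haepos t] with ξ hξ
      simpa [Real.norm_eq_abs] using hb (x - ξ) (by linarith)
    have := norm_integral_le_of_norm_le_const (μ := ν t) hub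
    simpa [Real.norm_eq_abs, measure_univ] using this
  have hintLB : ∀ (t : ℕ) (h : ℝ → ℝ) (L : ℝ), (∀ z, L ≤ h z) →
      min 0 L ≤ ∫ ξ, h ξ ∂ν t := by
    intro t h L hL
    haveI := hprob t
    by_cases hi : Integrable h (ν t)
    · have h1 : L ≤ ∫ ξ, h ξ ∂ν t := by
        have := integral_mono (μ := ν t) (integrable_const L) hi (fun ξ => hL ξ)
        simpa [measure_univ] using this
      exact le_trans (min_le_right _ _) h1
    · rw [integral_undef hi]
      exact min_le_left _ _
  have hparam : ∀ (t : ℕ) (h : ℝ → ℝ), Measurable h →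
      Measurable (fun x => ∫ ξ, h (x - ξ) ∂ν t) := by
    intro t h hm
    haveI := hprob t
    have hsm : StronglyMeasurable (fun p : ℝ × ℝ => h (p.1 - p.2)) :=
      (hm.comp (measurable_fst.sub measurable_snd)).stronglyMeasurable
    exact hsm.integral_prod_right'.measurable
  have hKnn : ∀ t, t < T → 0 ≤ K t := hK0
  have hsS : ∀ t, t < T → s t ≤ S t := by
    intro t ht
    by_cases h2 : t + 2 ≤ T
    · rcases eq_or_lt_of_le (hK0 t ht) with he | hl
      · rw [hsdef0 t h2 he.symm]
      · exact (hsdef1 t h2 hl).1.2.2.1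
    · have heq : t = T - 1 := by omega
      rw [heq, hST1]
      exact hsT1a
  -- Vstar upper bound via a single point of Ici x
  have hVstarLE : ∀ t, t < T → (∃ LH, ∀ y, LH ≤ Hstar t y) → ∀ x y : ℝ, x ≤ y →
      Vstar t x ≤ K t * (if x < y then (1:ℝ) else 0) + Hstar t y := by
    intro t ht hLHe x y hxy
    obtain ⟨LH, hLH⟩ := hLHe
    rw [hVstar t ht x]
    refine csInf_le ⟨LH, ?_⟩ ⟨y, Set.mem_Ici.2 hxy, rfl⟩
    rintro w ⟨u, hu, rfl⟩
    have h1 := hLH u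
    have h2 : 0 ≤ K t * (if x < u then (1:ℝ) else 0) := by
      split_ifs
      · simpa using hK0 t ht
      · simp
    simp only
    linarith
  have HstarLB : ∀ t, t < T → (∃ L1, ∀ z, L1 ≤ Vstar (t + 1) z) →
      ∃ LH, ∀ y, LH ≤ Hstar t y := by
    intro t ht hL1e
    obtain ⟨L1, hL1⟩ := hL1e
    refine ⟨C t (Cm t) + α * min 0 L1, fun y => ?_⟩
    rw [hHstar t ht y]
    have h1 := (hCm t ht).1 y
    have h2 := hintLB t (fun ξ => Vstar (t + 1) (y - ξ)) L1 (fun z => hL1 _)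
    have h3 : α * min 0 L1 ≤ α * ∫ ξ, Vstar (t + 1) (y - ξ) ∂ν t :=
      mul_le_mul_of_nonneg_left h2 hα0.le
    linarith
  have HstarMeas : ∀ t, t < T → Measurable (Vstar (t + 1)) → Measurable (Hstar t) := by
    intro t ht hm
    have he : Hstar t = fun y => C t y + α * ∫ ξ, Vstar (t + 1) (y - ξ) ∂ν t :=
      funext (hHstar t ht)
    rw [he]
    exact (hCcont t ht).measurable.add ((hparam t _ hm).const_mul α)
  have VstarFacts : ∀ t, t < T → Measurable (Hstar t) → (∃ LH, ∀ y, LH ≤ Hstar t y) →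
      Measurable (Vstar t) ∧ (∃ L, ∀ z : ℝ, L ≤ Vstar t z) ∧
        (∀ M : ℝ, ∃ B, ∀ z : ℝ, z ≤ M → Vstar t z ≤ B) := by
    intro t ht hHm hLHe
    obtain ⟨LH, hLH⟩ := hLHe
    have hbddIm : ∀ x : ℝ, BddBelow
        ((fun y => K t * (if x < y then (1:ℝ) else 0) + Hstar t y) '' Set.Ici x) := by
      intro x
      refine ⟨LH, ?_⟩
      rintro w ⟨u, hu, rfl⟩
      have h1 := hLH u
      have h2 : 0 ≤ K t * (if x < u then (1:ℝ) else 0) := by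
        split_ifs
        · simpa using hK0 t ht
        · simp
      simp only
      linarith
    have hbdd2 : ∀ x : ℝ, BddBelow ((fun y => K t + Hstar t y) '' Set.Ioi x) := by
      intro x
      refine ⟨K t + LH, ?_⟩
      rintro w ⟨u, hu, rfl⟩
      show K t + LH ≤ K t + Hstar t u; linarith [hLH u]
    have hne2 : ∀ x : ℝ, ((fun y => K t + Hstar t y) '' Set.Ioi x).Nonempty :=
      fun x => Set.Nonempty.image _ Set.nonempty_Ioi
    have him : ∀ x : ℝ, (fun y => K t * (if x < y then (1:ℝ) else 0) + Hstar t y) '' Set.Ici x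
        = insert (Hstar t x) ((fun y => K t + Hstar t y) '' Set.Ioi x) := by
      intro x
      rw [← Set.Ioi_insert, Set.image_insert_eq]
      congr 1
      · simp
      · apply Set.image_congr
        intro y hy
        simp [Set.mem_Ioi.1 hy]
    have hdecomp : ∀ x : ℝ, Vstar t x
        = min (Hstar t x) (sInf ((fun y => K t + Hstar t y) '' Set.Ioi x)) := by
      intro x
      rw [hVstar t ht x, him x, csInf_insert (hbdd2 x) (hne2 x)]
    have hmono : Monotone (fun x => sInf ((fun y => K t + Hstar t y) '' Set.Ioi x)) := by
      intro a b hab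
      exact csInf_le_csInf (hbdd2 a) (hne2 b) (Set.image_mono (Set.Ioi_subset_Ioi hab))
    refine ⟨?_, ⟨LH, fun z => ?_⟩, fun M => ⟨K t + Hstar t M, fun z hz => ?_⟩⟩
    · have he : Vstar t = fun x => min (Hstar t x) (sInf ((fun y => K t + Hstar t y) '' Set.Ioi x)) :=
        funext hdecomp
      rw [he]
      exact hHm.min hmono.measurable
    · rw [hVstar t ht z]
      refine le_csInf ⟨_, Set.mem_image_of_mem _ (Set.mem_Ici.2 (le_refl z))⟩ ?_
      rintro w ⟨u, hu, rfl⟩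
      have h1 := hLH u
      have h2 : 0 ≤ K t * (if z < u then (1:ℝ) else 0) := by
        split_ifs
        · simpa using hK0 t ht
        · simp
      simp only
      linarith
    · have h1 : Vstar t z ≤ K t * (if z < M then (1:ℝ) else 0) + Hstar t M := by
        rw [hVstar t ht z]
        exact csInf_le (hbddIm z) ⟨M, Set.mem_Ici.2 hz, rfl⟩
      have h2 : K t * (if z < M then (1:ℝ) else 0) ≤ K t := by
        split_ifs
        · simp
        · simpa using hK0 t ht
      linarith
  -- ### Auxiliary induction: measurability and boundedness
  have aux : ∀ d : ℕ, ∀ t, t < T → T - t = d + 1 →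
      (Measurable (V t) ∧ ∀ M : ℝ, ∃ B, 0 ≤ B ∧ ∀ z : ℝ, z ≤ M → |V t z| ≤ B) ∧
      (Measurable (eps t) ∧ ∀ M : ℝ, ∃ B, 0 ≤ B ∧ ∀ z : ℝ, z ≤ M → |eps t z| ≤ B) ∧
      (Measurable (Vstar t) ∧ (∃ L, ∀ z : ℝ, L ≤ Vstar t z) ∧
        (∀ M : ℝ, ∃ B, ∀ z : ℝ, z ≤ M → Vstar t z ≤ B)) := by
    intro d
    induction d with
    | zero =>
      intro t ht hd
      have htT : t = T - 1 := by omega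
      subst htT
      have htlt : T - 1 < T := by omega
      have e1 : T - 1 + 1 = T := by omega
      constructor
      · -- V (T-1)
        have hVeq : V (T - 1) = fun y =>
            if y < s (T - 1) then C (T - 1) (S (T - 1)) + K (T - 1) else C (T - 1) y := by
          funext y
          rw [hV (T - 1) htlt y, hHT1, hHT1]
        constructor
        · rw [hVeq]
          exact Measurable.ite measurableSet_Iio measurable_const (hCcont _ htlt).measurable
        · intro M
          obtain ⟨B0, hB0⟩ := (isCompact_Icc (a := min (s (T - 1)) M) (b := M)).exists_bound_of_continuousOn
            ((hCcont (T - 1) htlt).continuousOn)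
          refine ⟨max (max B0 |C (T - 1) (S (T - 1)) + K (T - 1)|) 0, le_max_right _ _, ?_⟩
          intro z hz
          rw [hVeq]
          simp only
          split_ifs with h
          · exact le_trans (le_max_right B0 _) (le_max_left _ _)
          · have hz1 : z ∈ Set.Icc (min (s (T - 1)) M) M :=
              ⟨le_trans (min_le_left _ _) (not_lt.1 h), hz⟩
            have := hB0 z hz1
            rw [Real.norm_eq_abs] at this
            exact le_trans this (le_trans (le_max_left _ _) (le_max_left _ _))
      constructor
      · -- eps (T-1)
        have he : eps (T - 1) = fun _ => (0:ℝ) := funext hepsT1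
        refine ⟨by rw [he]; exact measurable_const, fun M => ⟨0, le_refl 0, fun z hz => ?_⟩⟩
        rw [he]
        simp
      · -- Vstar (T-1)
        have hVsTm : Measurable (Vstar T) := by
          have : Vstar T = fun _ => (0:ℝ) := funext hVstarT
          rw [this]; exact measurable_const
        refine VstarFacts (T - 1) htlt (HstarMeas (T - 1) htlt ?_) (HstarLB (T - 1) htlt ⟨0, ?_⟩)
        · rw [e1]; exact hVsTm
        · intro z; rw [e1, hVstarT]
    | succ d ih =>
      intro t ht hd
      have h2 : t + 2 ≤ T := by omega
      have htlt : t < T := by omega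
      obtain ⟨⟨Vm1, Vb1⟩, ⟨em1, eb1⟩, Vsm1, hVsLB1, Vsb1⟩ := ih (t + 1) (by omega) (by omega)
      -- the tsum term
      have hVsum : ∀ y : ℝ, Summable (fun n : ℕ => V (t + 1) (y - ((n : ℝ) - 1) * θ) * f t ((n : ℤ) - 1)) := by
        intro y
        obtain ⟨B, hB0, hB⟩ := Vb1 (y + θ)
        apply Summable.of_norm_bounded ((hfsummable t).mul_left B)
        intro n
        rw [Real.norm_eq_abs, abs_mul, abs_of_nonneg (hfnn t _)]
        refine mul_le_mul_of_nonneg_right (hB _ ?_) (hfnn t _)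
        have h0 : (0:ℝ) ≤ (n : ℝ) := n.cast_nonneg
        nlinarith
      have hgmeas : Measurable (fun y => ∑' n : ℕ, V (t + 1) (y - ((n : ℝ) - 1) * θ) * f t ((n : ℤ) - 1)) := by
        apply measurable_of_tendsto_metrizable' atTop
          (f := fun (N : ℕ) (y : ℝ) => ∑ n ∈ Finset.range N, V (t + 1) (y - ((n : ℝ) - 1) * θ) * f t ((n : ℤ) - 1))
        · intro N
          exact Finset.measurable_sum _ fun n _ =>
            (Vm1.comp (measurable_id.sub measurable_const)).mul_const _
        · rw [tendsto_pi_nhds]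
          intro y
          exact (hVsum y).hasSum.tendsto_sum_nat
      have hgbd : ∀ M : ℝ, ∃ B, 0 ≤ B ∧ ∀ y : ℝ, y ≤ M →
          |∑' n : ℕ, V (t + 1) (y - ((n : ℝ) - 1) * θ) * f t ((n : ℤ) - 1)| ≤ B := by
        intro M
        obtain ⟨B, hB0, hB⟩ := Vb1 (M + θ)
        refine ⟨B, hB0, fun y hy => ?_⟩
        have hnorm : ‖∑' n : ℕ, V (t + 1) (y - ((n : ℝ) - 1) * θ) * f t ((n : ℤ) - 1)‖
            ≤ B * ∑' n : ℕ, f t ((n : ℤ) - 1) := by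
          refine tsum_of_norm_bounded ((hfsummable t).hasSum.mul_left B) ?_
          intro n
          rw [Real.norm_eq_abs, abs_mul, abs_of_nonneg (hfnn t _)]
          refine mul_le_mul_of_nonneg_right (hB _ ?_) (hfnn t _)
          have h0 : (0:ℝ) ≤ (n : ℝ) := n.cast_nonneg
          nlinarith
        rw [Real.norm_eq_abs] at hnorm
        refine hnorm.trans ?_
        calc B * ∑' n : ℕ, f t ((n : ℤ) - 1) ≤ B * 1 :=
              mul_le_mul_of_nonneg_left (hfsum_le t) hB0
          _ = B := mul_one B
      have hHeq : H t = fun y => C t y + α * ∑' n : ℕ, V (t + 1) (y - ((n : ℝ) - 1) * θ) * f t ((n : ℤ) - 1) :=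
        funext fun y => hHrec t h2 y
      have hHmeas : Measurable (H t) := by
        rw [hHeq]
        exact (hCcont t htlt).measurable.add (hgmeas.const_mul α)
      constructor
      · -- V t
        have hVeq : V t = fun y => if y < s t then H t (S t) + K t else H t y :=
          funext fun y => hV t htlt y
        constructor
        · rw [hVeq]
          exact Measurable.ite measurableSet_Iio measurable_const hHmeas
        · intro M
          obtain ⟨Bc, hBc⟩ := (isCompact_Icc (a := min (s t) M) (b := M)).exists_bound_of_continuousOn
            ((hCcont t htlt).continuousOn)
          obtain ⟨Bg, hBg0, hBg⟩ := hgbd M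
          refine ⟨max |H t (S t) + K t| (Bc + Bg), le_trans (abs_nonneg _) (le_max_left _ _), ?_⟩
          intro z hz
          rw [hVeq]
          simp only
          split_ifs with h
          · exact le_max_left _ _
          · rw [hHrec t h2 z]
            have h1 := hBc z ⟨le_trans (min_le_left _ _) (not_lt.1 h), hz⟩
            rw [Real.norm_eq_abs] at h1
            have h2' := hBg z hz
            calc |C t z + α * ∑' n : ℕ, V (t + 1) (z - ((n : ℝ) - 1) * θ) * f t ((n : ℤ) - 1)|
                ≤ |C t z| + |α * ∑' n : ℕ, V (t + 1) (z - ((n : ℝ) - 1) * θ) * f t ((n : ℤ) - 1)| :=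
                  abs_add_le _ _
              _ ≤ Bc + Bg := by
                  refine add_le_add h1 ?_
                  rw [abs_mul, abs_of_pos hα0]
                  nlinarith [abs_nonneg (∑' n : ℕ, V (t + 1) (z - ((n : ℝ) - 1) * θ) * f t ((n : ℤ) - 1))]
              _ ≤ max |H t (S t) + K t| (Bc + Bg) := le_max_right _ _
      constructor
      · -- eps t
        have hAeq : A (t + 1) = fun x => (∫ ξ, V (t + 1) (x - ξ) ∂ν t)
            - ∑' n : ℕ, V (t + 1) (x - ((n : ℝ) - 1) * θ) * f t ((n : ℤ) - 1) := by
          funext x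
          have := hA (t + 1) (by omega) (by omega) x
          simpa [Nat.add_sub_cancel] using this
        have hepseq : eps t = fun x => if x < s t
            then (α * A (t + 1) (S t) + α * ∫ ξ, eps (t + 1) (S t - ξ) ∂ν t)
            else (α * A (t + 1) x + α * ∫ ξ, eps (t + 1) (x - ξ) ∂ν t) :=
          funext fun x => heps t h2 x
        have hAmeas : Measurable (A (t + 1)) := by
          rw [hAeq]
          exact (hparam t _ Vm1).sub hgmeas
        constructor
        · rw [hepseq]
          exact Measurable.ite measurableSet_Iio measurable_const
            ((hAmeas.const_mul α).add ((hparam t _ em1).const_mul α))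
        · intro M
          obtain ⟨BV, hBV0, hBV⟩ := Vb1 M
          obtain ⟨Bg, hBg0, hBg⟩ := hgbd M
          obtain ⟨BE, hBE0, hBE⟩ := eb1 M
          refine ⟨max |α * A (t + 1) (S t) + α * ∫ ξ, eps (t + 1) (S t - ξ) ∂ν t| (BV + Bg + BE),
            le_trans (abs_nonneg _) (le_max_left _ _), ?_⟩
          intro z hz
          rw [hepseq]
          simp only
          split_ifs with h
          · exact le_max_left _ _
          · have hAz : |A (t + 1) z| ≤ BV + Bg := by
              rw [hAeq]
              simp only
              refine (abs_sub _ _).trans (add_le_add ?_ ?_)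
              · exact hintbd t (V (t + 1)) z BV (fun w hw => hBV w (le_trans hw hz))
              · exact hBg z hz
            have hEz : |∫ ξ, eps (t + 1) (z - ξ) ∂ν t| ≤ BE :=
              hintbd t _ z BE (fun w hw => hBE w (le_trans hw hz))
            refine le_trans (abs_add_le _ _) (le_trans ?_ (le_max_right _ _))
            rw [abs_mul, abs_mul, abs_of_pos hα0]
            nlinarith [abs_nonneg (A (t + 1) z), abs_nonneg (∫ ξ, eps (t + 1) (z - ξ) ∂ν t)]
      · -- Vstar t
        exact VstarFacts t htlt (HstarMeas t htlt Vsm1) (HstarLB t htlt hVsLB1)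
  have AUX : ∀ t, t < T →
      (Measurable (V t) ∧ ∀ M : ℝ, ∃ B, 0 ≤ B ∧ ∀ z : ℝ, z ≤ M → |V t z| ≤ B) ∧
      (Measurable (eps t) ∧ ∀ M : ℝ, ∃ B, 0 ≤ B ∧ ∀ z : ℝ, z ≤ M → |eps t z| ≤ B) ∧
      (Measurable (Vstar t) ∧ (∃ L, ∀ z : ℝ, L ≤ Vstar t z) ∧
        (∀ M : ℝ, ∃ B, ∀ z : ℝ, z ≤ M → Vstar t z ≤ B)) :=
    fun t ht => aux (T - t - 1) t ht (by omega)
  -- ### Main induction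
  have main : ∀ d : ℕ, ∀ t, t < T → T - t = d + 1 → ∀ x : ℝ,
      Vstar t x ≤ V t x + eps t x ∧ vsS t x = V t x - c t * x + eps t x := by
    intro d
    induction d with
    | zero =>
      intro t ht hd x
      have htT : t = T - 1 := by omega
      subst htT
      have htlt : T - 1 < T := by omega
      have e1 : T - 1 + 1 = T := by omega
      haveI := hprob (T - 1)
      have hHstarC : ∀ y, Hstar (T - 1) y = C (T - 1) y := by
        intro y
        rw [hHstar (T - 1) htlt y]
        have hz : (∫ ξ, Vstar (T - 1 + 1) (y - ξ) ∂ν (T - 1)) = 0 := by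
          rw [e1]
          simp [hVstarT]
        rw [hz]
        ring
      have hsS1 : s (T - 1) ≤ S (T - 1) := hsS _ htlt
      have hLHe : ∃ LH, ∀ y, LH ≤ Hstar (T - 1) y :=
        ⟨C (T - 1) (Cm (T - 1)), fun y => by rw [hHstarC]; exact (hCm _ htlt).1 y⟩
      have hlin : ∀ y₀ : ℝ, (∫ ξ, vsS T (y₀ - ξ) ∂ν (T - 1))
          = -(c T) * y₀ + c T * ∫ ξ, ξ ∂ν (T - 1) := by
        intro y₀
        have hfun : (fun ξ => vsS T (y₀ - ξ)) = fun ξ : ℝ => -(c T) * y₀ + c T * ξ := by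
          funext ξ
          rw [hvsST]
          ring
        rw [hfun, integral_add (integrable_const _) ((hDint (T - 1) htlt).const_mul _),
          integral_const, integral_const_mul]
        simp [measure_univ]
      have hrec := hvsSRec (T - 1) htlt x
      rw [e1] at hrec
      have hVx := hV (T - 1) htlt x
      have hepsx := hepsT1 x
      by_cases hx : x < s (T - 1)
      · rw [if_pos hx] at hVx
        simp only [if_pos hx] at hrec
        rw [hlin] at hrec
        have hC := hCdef (T - 1) htlt (S (T - 1))
        rw [e1] at hC
        have hxS : x < S (T - 1) := lt_of_lt_of_le hx hsS1
        constructor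
        · have h1 := hVstarLE (T - 1) htlt hLHe x (S (T - 1)) hxS.le
          rw [if_pos hxS, hHstarC] at h1
          rw [hVx, hHT1, hepsx]
          linarith
        · rw [hVx, hHT1, hepsx]
          linear_combination hrec - hC
      · rw [if_neg hx] at hVx
        simp only [if_neg hx] at hrec
        rw [hlin] at hrec
        have hC := hCdef (T - 1) htlt x
        rw [e1] at hC
        constructor
        · have h1 := hVstarLE (T - 1) htlt hLHe x x (le_refl x)
          rw [if_neg (lt_irrefl x), hHstarC] at h1
          rw [hVx, hHT1, hepsx]
          linarith
        · rw [hVx, hHT1, hepsx]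
          linear_combination hrec - hC
    | succ d ih =>
      intro t ht hd x
      have h2 : t + 2 ≤ T := by omega
      have htlt : t < T := by omega
      have ht1 : t + 1 < T := by omega
      haveI := hprob t
      have IH := ih (t + 1) ht1 (by omega)
      obtain ⟨⟨Vm1, Vb1⟩, ⟨em1, eb1⟩, Vsm1, ⟨L1, hL1⟩, Vsb1⟩ := AUX (t + 1) ht1
      have hLHe : ∃ LH, ∀ y, LH ≤ Hstar t y := HstarLB t htlt ⟨L1, hL1⟩
      have key : ∀ y₀ : ℝ, (∫ ξ, vsS (t + 1) (y₀ - ξ) ∂ν t)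
            = (∫ ξ, V (t + 1) (y₀ - ξ) ∂ν t) + (∫ ξ, eps (t + 1) (y₀ - ξ) ∂ν t)
              + (-(c (t + 1)) * y₀ + c (t + 1) * ∫ ξ, ξ ∂ν t) := by
        intro y₀
        obtain ⟨BV, hBV0, hBV⟩ := Vb1 y₀
        obtain ⟨BE, hBE0, hBE⟩ := eb1 y₀
        have iV : Integrable (fun ξ => V (t + 1) (y₀ - ξ)) (ν t) := hint t _ y₀ BV Vm1 hBV
        have iE : Integrable (fun ξ => eps (t + 1) (y₀ - ξ)) (ν t) := hint t _ y₀ BE em1 hBE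
        have hfun : (fun ξ => vsS (t + 1) (y₀ - ξ))
            = fun ξ => (V (t + 1) (y₀ - ξ) + eps (t + 1) (y₀ - ξ))
                + (-(c (t + 1)) * y₀ + c (t + 1) * ξ) := by
          funext ξ
          rw [(IH (y₀ - ξ)).2]
          ring
        have iVE : Integrable (fun ξ => V (t + 1) (y₀ - ξ) + eps (t + 1) (y₀ - ξ)) (ν t) := iV.add iE
        have iLc : Integrable (fun _ : ℝ => -(c (t + 1)) * y₀) (ν t) := integrable_const _
        have iLm : Integrable (fun ξ : ℝ => c (t + 1) * ξ) (ν t) := (hDint t htlt).const_mul _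
        have iLin : Integrable (fun ξ : ℝ => -(c (t + 1)) * y₀ + c (t + 1) * ξ) (ν t) := iLc.add iLm
        rw [hfun, integral_add iVE iLin, integral_add iV iE, integral_add iLc iLm,
          integral_const, integral_const_mul]
        simp only [measure_univ, probReal_univ, ENNReal.toReal_one, one_smul, smul_eq_mul]
        ring
      have keyLE : ∀ y₀ : ℝ, (∫ ξ, Vstar (t + 1) (y₀ - ξ) ∂ν t)
          ≤ (∫ ξ, V (t + 1) (y₀ - ξ) ∂ν t) + (∫ ξ, eps (t + 1) (y₀ - ξ) ∂ν t) := by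
        intro y₀
        obtain ⟨BV, hBV0, hBV⟩ := Vb1 y₀
        obtain ⟨BE, hBE0, hBE⟩ := eb1 y₀
        obtain ⟨BU, hBU⟩ := Vsb1 y₀
        have iV : Integrable (fun ξ => V (t + 1) (y₀ - ξ)) (ν t) := hint t _ y₀ BV Vm1 hBV
        have iE : Integrable (fun ξ => eps (t + 1) (y₀ - ξ)) (ν t) := hint t _ y₀ BE em1 hBE
        have iVs : Integrable (fun ξ => Vstar (t + 1) (y₀ - ξ)) (ν t) := by
          refine hint t _ y₀ (max (-L1) BU) Vsm1 ?_
          intro z hz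
          rw [abs_le]
          refine ⟨?_, le_trans (hBU z hz) (le_max_right _ _)⟩
          have ha := hL1 z
          have hb := le_max_left (-L1) BU
          linarith
        have hmono : (∫ ξ, Vstar (t + 1) (y₀ - ξ) ∂ν t)
            ≤ ∫ ξ, (V (t + 1) (y₀ - ξ) + eps (t + 1) (y₀ - ξ)) ∂ν t :=
          integral_mono iVs (iV.add iE) (fun ξ => (IH (y₀ - ξ)).1)
        rwa [integral_add iV iE] at hmono
      have hAS : ∀ y₀ : ℝ, A (t + 1) y₀ = (∫ ξ, V (t + 1) (y₀ - ξ) ∂ν t)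
          - ∑' n : ℕ, V (t + 1) (y₀ - ((n : ℝ) - 1) * θ) * f t ((n : ℤ) - 1) := by
        intro y₀
        have := hA (t + 1) (by omega) ht1 y₀
        simpa [Nat.add_sub_cancel] using this
      have hrec := hvsSRec t htlt x
      have hVx := hV t htlt x
      have hepsx := heps t h2 x
      by_cases hx : x < s t
      · rw [if_pos hx] at hVx hepsx
        simp only [if_pos hx] at hrec
        rw [key] at hrec
        have hC := hCdef t htlt (S t)
        have hH := hHrec t h2 (S t)
        have hAx := hAS (S t)
        have hxS : x < S t := lt_of_lt_of_le hx (hsS t htlt)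
        have hVE : V t x + eps t x
            = K t + C t (S t) + α * (∫ ξ, V (t + 1) (S t - ξ) ∂ν t)
              + α * (∫ ξ, eps (t + 1) (S t - ξ) ∂ν t) := by
          rw [hVx, hepsx, hH, hAx]
          ring
        constructor
        · have h1 := hVstarLE t htlt hLHe x (S t) hxS.le
          rw [if_pos hxS, hHstar t htlt (S t)] at h1
          rw [mul_one] at h1
          have h4 : α * (∫ ξ, Vstar (t + 1) (S t - ξ) ∂ν t)
              ≤ α * (∫ ξ, V (t + 1) (S t - ξ) ∂ν t) + α * (∫ ξ, eps (t + 1) (S t - ξ) ∂ν t) := by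
            have := mul_le_mul_of_nonneg_left (keyLE (S t)) hα0.le
            linarith [mul_add α (∫ ξ, V (t + 1) (S t - ξ) ∂ν t) (∫ ξ, eps (t + 1) (S t - ξ) ∂ν t)]
          rw [hVE]
          linarith
        · linear_combination hrec - hVE - hC
      · rw [if_neg hx] at hVx hepsx
        simp only [if_neg hx] at hrec
        rw [key] at hrec
        have hC := hCdef t htlt x
        have hH := hHrec t h2 x
        have hAx := hAS x
        have hVE : V t x + eps t x
            = C t x + α * (∫ ξ, V (t + 1) (x - ξ) ∂ν t)
              + α * (∫ ξ, eps (t + 1) (x - ξ) ∂ν t) := by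
          rw [hVx, hepsx, hH, hAx]
          ring
        constructor
        · have h1 := hVstarLE t htlt hLHe x x (le_refl x)
          rw [if_neg (lt_irrefl x), hHstar t htlt x] at h1
          have h4 : α * (∫ ξ, Vstar (t + 1) (x - ξ) ∂ν t)
              ≤ α * (∫ ξ, V (t + 1) (x - ξ) ∂ν t) + α * (∫ ξ, eps (t + 1) (x - ξ) ∂ν t) := by
            have := mul_le_mul_of_nonneg_left (keyLE x) hα0.le
            linarith [mul_add α (∫ ξ, V (t + 1) (x - ξ) ∂ν t) (∫ ξ, eps (t + 1) (x - ξ) ∂ν t)]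
          rw [hVE]
          linarith
        · linear_combination hrec - hVE - hC
  intro t ht x
  obtain ⟨hm1, hm2⟩ := main (T - t - 1) t ht (by omega) x
  constructor
  · linarith
  · linarith
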